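/- Let 0 < x_C, x_D, y_C, y_D < 1 and define x_e, y_e as the equilibrium cooperation probabilities. Then the partial derivatives satisfy (∂x_e/∂x_C, ∂x_e/∂x_D, ∂y_e/∂y_C, ∂y_e/∂y_D) = (y_e, 1-y_e, x_e, 1-x_e)/(1 - (x_C - x_D)(y_C - y_D)). -/

import Mathlib

noncomputable def xeFun (xC xD yC yD : ℝ) : ℝ :=
  (xD + (xC - xD) * yD) / (1 - (xC - xD) * (yC - yD))

noncomputable def yeFun (xC xD yC yD : ℝ) : ℝ :=
  (yD + (yC - yD) * xD) / (1 - (xC - xD) * (yC - yD))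

theorem equilibrium_partial_derivatives
    (xC xD yC yD : ℝ)
    (hxC : 0 < xC) (hxC1 : xC < 1) (hxD : 0 < xD) (hxD1 : xD < 1)
    (hyC : 0 < yC) (hyC1 : yC < 1) (hyD : 0 < yD) (hyD1 : yD < 1) :
    HasDerivAt (fun a => xeFun a xD yC yD)
      (yeFun xC xD yC yD / (1 - (xC - xD) * (yC - yD))) xC ∧
    HasDerivAt (fun a => xeFun xC a yC yD)
      ((1 - yeFun xC xD yC yD) / (1 - (xC - xD) * (yC - yD))) xD ∧
    HasDerivAt (fun a => yeFun xC xD a yD)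
      (xeFun xC xD yC yD / (1 - (xC - xD) * (yC - yD))) yC ∧
    HasDerivAt (fun a => yeFun xC xD yC a)
      ((1 - xeFun xC xD yC yD) / (1 - (xC - xD) * (yC - yD))) yD := by
  have hD0 : 0 < 1 - (xC - xD) * (yC - yD) := by
    nlinarith [sq_nonneg (xC - xD - (yC - yD)), sq_nonneg (xC - xD + (yC - yD))]
  have hD : 1 - (xC - xD) * (yC - yD) ≠ 0 := ne_of_gt hD0
  refine ⟨?_, ?_, ?_, ?_⟩
  · have hN : HasDerivAt (fun a : ℝ => xD + (a - xD) * yD) yD xC := by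
      simpa using (((hasDerivAt_id xC).sub_const xD).mul_const yD).const_add xD
    have hM : HasDerivAt (fun a : ℝ => 1 - (a - xD) * (yC - yD)) (-(yC - yD)) xC := by
      simpa using (((hasDerivAt_id xC).sub_const xD).mul_const (yC - yD)).const_sub 1
    have := hN.div hM hD
    simp only [xeFun, yeFun]
    refine this.congr_deriv ?_
    field_simp
    ring
  · have hN : HasDerivAt (fun a : ℝ => a + (xC - a) * yD) (1 - yD) xD := by
      exact ((hasDerivAt_id' xD).add (((hasDerivAt_id' xD).const_sub xC).mul_const yD)).congr_deriv (by ring)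
    have hM : HasDerivAt (fun a : ℝ => 1 - (xC - a) * (yC - yD)) (yC - yD) xD := by
      simpa using (((hasDerivAt_id xD).const_sub xC).mul_const (yC - yD)).const_sub 1
    have := hN.div hM hD
    simp only [xeFun, yeFun]
    refine this.congr_deriv ?_
    field_simp
    ring
  · have hN : HasDerivAt (fun a : ℝ => yD + (a - yD) * xD) xD yC := by
      simpa using (((hasDerivAt_id yC).sub_const yD).mul_const xD).const_add yD
    have hM : HasDerivAt (fun a : ℝ => 1 - (xC - xD) * (a - yD)) (-(xC - xD)) yC := by
      simpa using (((hasDerivAt_id yC).sub_const yD).const_mul (xC - xD)).const_sub 1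
    have := hN.div hM hD
    simp only [xeFun, yeFun]
    refine this.congr_deriv ?_
    field_simp
    ring
  · have hN : HasDerivAt (fun a : ℝ => a + (yC - a) * xD) (1 - xD) yD := by
      exact ((hasDerivAt_id' yD).add (((hasDerivAt_id' yD).const_sub yC).mul_const xD)).congr_deriv (by ring)
    have hM : HasDerivAt (fun a : ℝ => 1 - (xC - xD) * (yC - a)) (xC - xD) yD := by
      simpa using (((hasDerivAt_id yD).const_sub yC).const_mul (xC - xD)).const_sub 1
    have := hN.div hM hD
    simp only [xeFun, yeFun]
    refine this.congr_deriv ?_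
    field_simp
    ring
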